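/- Let K ≥ 2 and let Ξ = { z ∈ ℝ^K : Σ_{j=1}^K z_j = K−1, 0 ≤ z_1 ≤ ... ≤ z_K ≤ 1 }. For each j ∈ [K], let z_j^* ∈ ℝ^K be the vector whose first j coordinates equal 1 − 1/j and whose remaining K−j coordinates equal 1. Then each z_j^* is an extreme point of the convex set Ξ. -/

import Mathlib

theorem zstar_extreme_point (K : ℕ) (hK : 2 ≤ K) (j : Fin K) :
    (fun i : Fin K => if (i : ℕ) ≤ (j : ℕ) then 1 - 1 / ((j : ℕ) + 1 : ℝ) else 1) ∈
      Set.extremePoints ℝ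
        {z : Fin K → ℝ | (∑ i, z i) = K - 1 ∧ Monotone z ∧
          (∀ i, 0 ≤ z i ∧ z i ≤ 1)} := by
  set c : ℝ := 1 - 1 / ((j : ℕ) + 1 : ℝ) with hc
  set zs : Fin K → ℝ := fun i : Fin K => if (i : ℕ) ≤ (j : ℕ) then c else 1 with hzs
  have hj1 : (0:ℝ) < (j : ℕ) + 1 := by positivity
  have hjK : (j : ℕ) + 1 ≤ K := j.2
  have hinv : (0:ℝ) < 1 / ((j : ℕ) + 1 : ℝ) := by positivity
  have hinv1 : 1 / ((j : ℕ) + 1 : ℝ) ≤ 1 := by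
    rw [div_le_one hj1]; linarith [Nat.cast_nonneg (α := ℝ) (j : ℕ)]
  have hc0 : 0 ≤ c := by rw [hc]; linarith
  have hc1 : c ≤ 1 := by rw [hc]; linarith
  have hcj : ((j : ℕ) : ℝ) = ((j : ℕ) + 1) * c := by
    rw [hc]; field_simp; ring
  set A : Finset (Fin K) := Finset.Iic j with hA
  have hAmem : ∀ i : Fin K, i ∈ A ↔ (i : ℕ) ≤ (j : ℕ) := by
    intro i; rw [hA, Finset.mem_Iic, Fin.le_def]
  have hAcard : A.card = (j : ℕ) + 1 := Fin.card_Iic j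
  have hAc : (Aᶜ.card : ℝ) = (K : ℝ) - ((j : ℕ) + 1) := by
    rw [Finset.card_compl, hAcard, Fintype.card_fin, Nat.cast_sub hjK]; push_cast; ring
  -- sums over A and Aᶜ of zs
  have hsumA : ∑ i ∈ A, zs i = ((j : ℕ) : ℝ) := by
    have : ∀ i ∈ A, zs i = c := by
      intro i hi; rw [hzs]; simp only [if_pos ((hAmem i).mp hi)]
    rw [Finset.sum_congr rfl this, Finset.sum_const, hAcard, nsmul_eq_mul, hcj]; push_cast; ring
  have hsumAc : ∑ i ∈ Aᶜ, zs i = (K : ℝ) - ((j : ℕ) + 1) := by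
    have : ∀ i ∈ Aᶜ, zs i = 1 := by
      intro i hi
      rw [Finset.mem_compl] at hi
      rw [hzs]; simp only [if_neg (fun h => hi ((hAmem i).mpr h))]
    rw [Finset.sum_congr rfl this, Finset.sum_const, nsmul_eq_mul, mul_one, hAc]
  -- zs is in the set
  have hz : zs ∈ {z : Fin K → ℝ | (∑ i, z i) = K - 1 ∧ Monotone z ∧
      (∀ i, 0 ≤ z i ∧ z i ≤ 1)} := by
    refine ⟨?_, ?_, ?_⟩
    · rw [← Finset.sum_add_sum_compl A, hsumA, hsumAc]; ring
    · intro a b hab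
      have hab' : (a : ℕ) ≤ (b : ℕ) := hab
      rw [hzs]; dsimp only
      split_ifs with h1 h2 h2
      · exact le_refl _
      · exact hc1
      · omega
      · exact le_refl _
    · intro i
      rw [hzs]; dsimp only
      split_ifs
      · exact ⟨hc0, hc1⟩
      · exact ⟨zero_le_one, le_refl _⟩
  -- key inequality: any member has x j ≥ c
  have key : ∀ x ∈ {z : Fin K → ℝ | (∑ i, z i) = K - 1 ∧ Monotone z ∧
      (∀ i, 0 ≤ z i ∧ z i ≤ 1)}, ((j : ℕ) : ℝ) ≤ ∑ i ∈ A, x i ∧ c ≤ x j := by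
    intro x hx
    obtain ⟨hs, hm, hb⟩ := hx
    have h2 : ∑ i ∈ Aᶜ, x i ≤ (Aᶜ.card : ℝ) := by
      calc ∑ i ∈ Aᶜ, x i ≤ Aᶜ.card • (1:ℝ) :=
            Finset.sum_le_card_nsmul _ _ _ (fun i _ => (hb i).2)
        _ = (Aᶜ.card : ℝ) := by rw [nsmul_eq_mul, mul_one]
    have hsplit : ∑ i ∈ A, x i + ∑ i ∈ Aᶜ, x i = (K : ℝ) - 1 := by
      rw [Finset.sum_add_sum_compl A x]; exact hs
    have h1 : ((j : ℕ) : ℝ) ≤ ∑ i ∈ A, x i := by rw [hAc] at h2; linarith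
    have h3 : ∑ i ∈ A, x i ≤ ((j : ℕ) + 1 : ℝ) * x j := by
      calc ∑ i ∈ A, x i ≤ A.card • x j :=
            Finset.sum_le_card_nsmul _ _ _ (fun i hi => hm (Finset.mem_Iic.mp hi))
        _ = ((j : ℕ) + 1 : ℝ) * x j := by rw [hAcard, nsmul_eq_mul]; push_cast; ring
    refine ⟨h1, ?_⟩
    have h4 : ((j : ℕ) + 1) * c ≤ ((j : ℕ) + 1) * x j := by rw [← hcj]; linarith
    exact le_of_mul_le_mul_left h4 hj1
  -- if a member has x j = c then x = zs
  have heq : ∀ x ∈ {z : Fin K → ℝ | (∑ i, z i) = K - 1 ∧ Monotone z ∧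
      (∀ i, 0 ≤ z i ∧ z i ≤ 1)}, x j = c → x = zs := by
    intro x hx hxj
    obtain ⟨hjle, _⟩ := key x hx
    obtain ⟨hs, hm, hb⟩ := hx
    have hle : ∀ i ∈ A, x i ≤ (fun _ : Fin K => c) i := by
      intro i hi
      calc x i ≤ x j := hm (Finset.mem_Iic.mp hi)
        _ = c := hxj
    have hsumAx : ∑ i ∈ A, x i = ∑ i ∈ A, (fun _ : Fin K => c) i := by
      apply le_antisymm (Finset.sum_le_sum hle)
      rw [Finset.sum_const, hAcard, nsmul_eq_mul]
      rw [hcj] at hjle; push_cast at hjle ⊢; linarith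
    have hAeq : ∀ i ∈ A, x i = c := (Finset.sum_eq_sum_iff_of_le hle).mp hsumAx
    -- complement part
    have hsumAx' : ∑ i ∈ A, x i = ((j : ℕ) : ℝ) := by
      rw [hsumAx, Finset.sum_const, hAcard, nsmul_eq_mul, hcj]; push_cast; ring
    have hle' : ∀ i ∈ Aᶜ, x i ≤ (fun _ : Fin K => (1:ℝ)) i := fun i _ => (hb i).2
    have hsplit : ∑ i ∈ A, x i + ∑ i ∈ Aᶜ, x i = (K : ℝ) - 1 := by
      rw [Finset.sum_add_sum_compl A x]; exact hs
    have hsumAcx : ∑ i ∈ Aᶜ, x i = ∑ i ∈ Aᶜ, (fun _ : Fin K => (1:ℝ)) i := by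
      rw [Finset.sum_const, nsmul_eq_mul, mul_one, hAc]
      rw [hsumAx'] at hsplit; linarith
    have hAceq : ∀ i ∈ Aᶜ, x i = 1 := (Finset.sum_eq_sum_iff_of_le hle').mp hsumAcx
    funext i
    by_cases hi : (i : ℕ) ≤ (j : ℕ)
    · rw [hzs]; simp only [if_pos hi]; exact hAeq i ((hAmem i).mpr hi)
    · rw [hzs]; simp only [if_neg hi]
      exact hAceq i (Finset.mem_compl.mpr (fun h => hi ((hAmem i).mp h)))
  -- conclude
  rw [mem_extremePoints]
  refine ⟨hz, ?_⟩
  intro x hx y hy hseg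
  obtain ⟨a, b, ha, hb', hab, hxy⟩ := hseg
  have hxj := (key x hx).2
  have hyj := (key y hy).2
  have hzj : zs j = c := by rw [hzs]; simp
  have hcomb : a * x j + b * y j = c := by
    have := congrFun hxy j
    simpa [hzj] using this
  have hxjc : x j = c := by nlinarith [mul_nonneg hb'.le (sub_nonneg.mpr hyj), mul_nonneg ha.le (sub_nonneg.mpr hxj)]
  have hyjc : y j = c := by nlinarith [mul_nonneg hb'.le (sub_nonneg.mpr hyj), mul_nonneg ha.le (sub_nonneg.mpr hxj)]
  exact ⟨heq x hx hxjc, heq y hy hyjc⟩
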